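/- Let A be an ε-compatible family of affine maps over E ⊂ ℝⁿ. Then for all x, y ∈ E and r, s > 0, ‖A'_{x,r} − A'_{y,s}‖ ≤ T_ε(τ)·ε·min(‖A'_{x,r}‖, ‖A'_{y,s}‖), where τ = max(r, s, 2|x−y|)/min(r,s) and T_ε(t) = (2 log₂ t + 1) t^{2 log₂(1+ε)}. -/
import Mathlib


open Metric

/-- `T_ε(t) = (2 log₂ t + 1)·t^{2 log₂(1+ε)}`. -/
noncomputable def Tfun (ε t : ℝ) : ℝ :=
  (2 * Real.logb 2 t + 1) * t ^ (2 * Real.logb 2 (1 + ε))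

/-- An `ε`-compatible family of affine maps over `E ⊆ ℝⁿ`. -/
def IsCompatibleFamily (n N : ℕ) (E : Set (EuclideanSpace ℝ (Fin n)))
    (A : EuclideanSpace ℝ (Fin n) → ℝ →
      ContinuousAffineMap ℝ (EuclideanSpace ℝ (Fin n)) (EuclideanSpace ℝ (Fin N)))
    (ε : ℝ) : Prop :=
  ∀ x ∈ E, ∀ y ∈ E, ∀ r s : ℝ, 0 < r → 0 < s →
    dist x y ≤ max r s → 1 / 2 ≤ r / s → r / s ≤ 2 →
    ‖(A x r).contLinear - (A y s).contLinear‖ ≤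
      ε * min ‖(A x r).contLinear‖ ‖(A y s).contLinear‖

private lemma rpow_swap_aux {a b : ℝ} (c : ℝ) (ha : 0 < a) (hb : 0 < b) :
    a ^ (c * Real.logb 2 b) = b ^ (c * Real.logb 2 a) := by
  rw [Real.rpow_def_of_pos ha, Real.rpow_def_of_pos hb, Real.logb, Real.logb]
  ring_nf

private lemma tele_aux {V : Type*} [NormedAddCommGroup V] (f : ℕ → V) (B : ℝ) :
    ∀ j : ℕ, (∀ i < j, ‖f (i + 1) - f i‖ ≤ B) → ‖f j - f 0‖ ≤ j * B := by
  intro j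
  induction j with
  | zero => simp
  | succ m ih =>
    intro h
    have h1 := ih (fun i hi => h i (by omega))
    have h2 := h m (by omega)
    have h3 := norm_sub_le_norm_sub_add_norm_sub (f (m + 1)) (f m) (f 0)
    push_cast
    linarith

section Main

variable {n N : ℕ} {E : Set (EuclideanSpace ℝ (Fin n))}
  {A : EuclideanSpace ℝ (Fin n) → ℝ →
      ContinuousAffineMap ℝ (EuclideanSpace ℝ (Fin n)) (EuclideanSpace ℝ (Fin N))}
  {ε : ℝ}

private lemma step_aux (hε : 0 < ε) (hA : IsCompatibleFamily n N E A ε)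
    {x : EuclideanSpace ℝ (Fin n)} (hx : x ∈ E) {ρ : ℝ} (hρ : 0 < ρ) :
    ‖(A x (2 * ρ)).contLinear - (A x ρ).contLinear‖ ≤
      ε * min ‖(A x (2 * ρ)).contLinear‖ ‖(A x ρ).contLinear‖ := by
  have hratio : (2 * ρ) / ρ = 2 := by field_simp
  exact hA x hx x hx (2 * ρ) ρ (by linarith) hρ
    (by rw [dist_self]; positivity) (by rw [hratio]; norm_num) (by rw [hratio])

private lemma stepUp_aux (hε : 0 < ε) (hA : IsCompatibleFamily n N E A ε)
    {x : EuclideanSpace ℝ (Fin n)} (hx : x ∈ E) {ρ : ℝ} (hρ : 0 < ρ) :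
    ‖(A x (2 * ρ)).contLinear‖ ≤ (1 + ε) * ‖(A x ρ).contLinear‖ := by
  have h := step_aux hε hA hx hρ
  have h2 := norm_sub_norm_le ((A x (2 * ρ)).contLinear) ((A x ρ).contLinear)
  have h3 : min ‖(A x (2 * ρ)).contLinear‖ ‖(A x ρ).contLinear‖ ≤
      ‖(A x ρ).contLinear‖ := min_le_right _ _
  have h4 := mul_le_mul_of_nonneg_left h3 hε.le
  rw [add_mul, one_mul]
  linarith

private lemma stepDown_aux (hε : 0 < ε) (hA : IsCompatibleFamily n N E A ε)
    {x : EuclideanSpace ℝ (Fin n)} (hx : x ∈ E) {ρ : ℝ} (hρ : 0 < ρ) :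
    ‖(A x ρ).contLinear‖ ≤ (1 + ε) * ‖(A x (2 * ρ)).contLinear‖ := by
  have h := step_aux hε hA hx hρ
  have h2 := norm_sub_norm_le ((A x ρ).contLinear) ((A x (2 * ρ)).contLinear)
  rw [norm_sub_rev] at h2
  have h3 : min ‖(A x (2 * ρ)).contLinear‖ ‖(A x ρ).contLinear‖ ≤
      ‖(A x (2 * ρ)).contLinear‖ := min_le_left _ _
  have h4 := mul_le_mul_of_nonneg_left h3 hε.le
  rw [add_mul, one_mul]
  linarith

private lemma up_aux (hε : 0 < ε) (hA : IsCompatibleFamily n N E A ε)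
    {x : EuclideanSpace ℝ (Fin n)} (hx : x ∈ E) {ρ : ℝ} (hρ : 0 < ρ) :
    ∀ j : ℕ, ‖(A x ((2 : ℝ) ^ j * ρ)).contLinear‖ ≤ (1 + ε) ^ j * ‖(A x ρ).contLinear‖ := by
  intro j
  induction j with
  | zero => simp
  | succ m ih =>
    have hρm : 0 < (2 : ℝ) ^ m * ρ := by positivity
    have h1 := stepUp_aux hε hA hx hρm
    have e : (2 : ℝ) ^ (m + 1) * ρ = 2 * ((2 : ℝ) ^ m * ρ) := by ring
    rw [e]
    calc ‖(A x (2 * ((2 : ℝ) ^ m * ρ))).contLinear‖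
        ≤ (1 + ε) * ‖(A x ((2 : ℝ) ^ m * ρ)).contLinear‖ := h1
      _ ≤ (1 + ε) * ((1 + ε) ^ m * ‖(A x ρ).contLinear‖) :=
          mul_le_mul_of_nonneg_left ih (by linarith)
      _ = (1 + ε) ^ (m + 1) * ‖(A x ρ).contLinear‖ := by ring

private lemma down_aux (hε : 0 < ε) (hA : IsCompatibleFamily n N E A ε)
    {x : EuclideanSpace ℝ (Fin n)} (hx : x ∈ E) :
    ∀ (j : ℕ) (ρ : ℝ), 0 < ρ →
      ‖(A x ρ).contLinear‖ ≤ (1 + ε) ^ j * ‖(A x ((2 : ℝ) ^ j * ρ)).contLinear‖ := by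
  intro j
  induction j with
  | zero => intro ρ hρ; simp
  | succ m ih =>
    intro ρ hρ
    have h1 := stepDown_aux hε hA hx hρ
    have h2 := ih (2 * ρ) (by linarith)
    have e : (2 : ℝ) ^ m * (2 * ρ) = (2 : ℝ) ^ (m + 1) * ρ := by ring
    rw [e] at h2
    calc ‖(A x ρ).contLinear‖ ≤ (1 + ε) * ‖(A x (2 * ρ)).contLinear‖ := h1
      _ ≤ (1 + ε) * ((1 + ε) ^ m * ‖(A x ((2 : ℝ) ^ (m + 1) * ρ)).contLinear‖) :=
          mul_le_mul_of_nonneg_left h2 (by linarith)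
      _ = (1 + ε) ^ (m + 1) * ‖(A x ((2 : ℝ) ^ (m + 1) * ρ)).contLinear‖ := by ring

private lemma main_aux (hε : 0 < ε) (hA : IsCompatibleFamily n N E A ε)
    {x y : EuclideanSpace ℝ (Fin n)} (hx : x ∈ E) (hy : y ∈ E) {r s : ℝ}
    (hr : 0 < r) (hs : 0 < s) (hrs : r ≤ s) :
    ‖(A x r).contLinear - (A y s).contLinear‖ ≤
      Tfun ε (max (max r s) (2 * dist x y) / min r s) * ε *
        min ‖(A x r).contLinear‖ ‖(A y s).contLinear‖ := by
  have hε1 : (0 : ℝ) < 1 + ε := by linarith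
  set R : ℝ := max s (2 * dist x y) with hRdef
  have hRmax : max (max r s) (2 * dist x y) = R := by rw [max_eq_right hrs]
  have hminrs : min r s = r := min_eq_left hrs
  have hRs : s ≤ R := le_max_left _ _
  have hRd : 2 * dist x y ≤ R := le_max_right _ _
  have hRr : r ≤ R := hrs.trans hRs
  have hRpos : 0 < R := lt_of_lt_of_le hs hRs
  set k : ℕ := ⌊Real.logb 2 (R / r)⌋₊ with hkdef
  set k' : ℕ := ⌊Real.logb 2 (R / s)⌋₊ with hk'def
  have h1r : 1 ≤ R / r := (one_le_div hr).mpr hRr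
  have h1s : 1 ≤ R / s := (one_le_div hs).mpr hRs
  have hlogr : 0 ≤ Real.logb 2 (R / r) := Real.logb_nonneg one_lt_two h1r
  have hlogs : 0 ≤ Real.logb 2 (R / s) := Real.logb_nonneg one_lt_two h1s
  -- 2^k * r ≤ R and R < 2 * (2^k * r)
  have hk_le : (2 : ℝ) ^ k * r ≤ R := by
    have h := Nat.floor_le hlogr
    have h2 : (2 : ℝ) ^ (k : ℝ) ≤ R / r := by
      calc (2 : ℝ) ^ (k : ℝ) ≤ (2 : ℝ) ^ (Real.logb 2 (R / r)) :=
            Real.rpow_le_rpow_of_exponent_le one_le_two h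
        _ = R / r := Real.rpow_logb two_pos (by norm_num) (by positivity)
    rw [Real.rpow_natCast] at h2
    calc (2 : ℝ) ^ k * r ≤ (R / r) * r := mul_le_mul_of_nonneg_right h2 hr.le
      _ = R := div_mul_cancel₀ _ hr.ne'
  have hk_gt : R < 2 * ((2 : ℝ) ^ k * r) := by
    have h : Real.logb 2 (R / r) < (k : ℝ) + 1 := by
      have := Nat.lt_succ_floor (Real.logb 2 (R / r))
      push_cast at this
      exact this
    have h2 : R / r < (2 : ℝ) ^ ((k : ℝ) + 1) := by
      calc R / r = (2 : ℝ) ^ (Real.logb 2 (R / r)) :=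
            (Real.rpow_logb two_pos (by norm_num) (by positivity)).symm
        _ < (2 : ℝ) ^ ((k : ℝ) + 1) := Real.rpow_lt_rpow_of_exponent_lt one_lt_two h
    have e : (2 : ℝ) ^ ((k : ℝ) + 1) = 2 * (2 : ℝ) ^ k := by
      rw [show ((k : ℝ) + 1) = ((k + 1 : ℕ) : ℝ) by push_cast; ring, Real.rpow_natCast]
      ring
    rw [e] at h2
    have := (div_lt_iff₀ hr).mp h2
    linarith
  have hk'_le : (2 : ℝ) ^ k' * s ≤ R := by
    have h := Nat.floor_le hlogs
    have h2 : (2 : ℝ) ^ (k' : ℝ) ≤ R / s := by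
      calc (2 : ℝ) ^ (k' : ℝ) ≤ (2 : ℝ) ^ (Real.logb 2 (R / s)) :=
            Real.rpow_le_rpow_of_exponent_le one_le_two h
        _ = R / s := Real.rpow_logb two_pos (by norm_num) (by positivity)
    rw [Real.rpow_natCast] at h2
    calc (2 : ℝ) ^ k' * s ≤ (R / s) * s := mul_le_mul_of_nonneg_right h2 hs.le
      _ = R := div_mul_cancel₀ _ hs.ne'
  have hk'_gt : R < 2 * ((2 : ℝ) ^ k' * s) := by
    have h : Real.logb 2 (R / s) < (k' : ℝ) + 1 := by
      have := Nat.lt_succ_floor (Real.logb 2 (R / s))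
      push_cast at this
      exact this
    have h2 : R / s < (2 : ℝ) ^ ((k' : ℝ) + 1) := by
      calc R / s = (2 : ℝ) ^ (Real.logb 2 (R / s)) :=
            (Real.rpow_logb two_pos (by norm_num) (by positivity)).symm
        _ < (2 : ℝ) ^ ((k' : ℝ) + 1) := Real.rpow_lt_rpow_of_exponent_lt one_lt_two h
    have e : (2 : ℝ) ^ ((k' : ℝ) + 1) = 2 * (2 : ℝ) ^ k' := by
      rw [show ((k' : ℝ) + 1) = ((k' + 1 : ℕ) : ℝ) by push_cast; ring, Real.rpow_natCast]
      ring
    rw [e] at h2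
    have := (div_lt_iff₀ hs).mp h2
    linarith
  have tx_pos : 0 < (2 : ℝ) ^ k * r := by positivity
  have ty_pos : 0 < (2 : ℝ) ^ k' * s := by positivity
  -- cross estimate
  have hcross : ‖(A x ((2 : ℝ) ^ k * r)).contLinear - (A y ((2 : ℝ) ^ k' * s)).contLinear‖ ≤
      ε * min ‖(A x ((2 : ℝ) ^ k * r)).contLinear‖ ‖(A y ((2 : ℝ) ^ k' * s)).contLinear‖ := by
    apply hA x hx y hy _ _ tx_pos ty_pos
    · have h := le_max_left ((2 : ℝ) ^ k * r) ((2 : ℝ) ^ k' * s)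
      linarith
    · rw [le_div_iff₀ ty_pos]; linarith
    · rw [div_le_iff₀ ty_pos]; linarith
  -- norms
  set mx : ℝ := ‖(A x r).contLinear‖ with hmxdef
  set my : ℝ := ‖(A y s).contLinear‖ with hmydef
  set tx : ℝ := ‖(A x ((2 : ℝ) ^ k * r)).contLinear‖ with htxdef
  set ty : ℝ := ‖(A y ((2 : ℝ) ^ k' * s)).contLinear‖ with htydef
  have hmx0 : 0 ≤ mx := norm_nonneg _
  have hmy0 : 0 ≤ my := norm_nonneg _
  have htx0 : 0 ≤ tx := norm_nonneg _
  have hty0 : 0 ≤ ty := norm_nonneg _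
  have htx_up : tx ≤ (1 + ε) ^ k * mx := up_aux hε hA hx hr k
  have hty_up : ty ≤ (1 + ε) ^ k' * my := up_aux hε hA hy hs k'
  have htxty : tx ≤ (1 + ε) * ty := by
    have h2 := norm_sub_norm_le ((A x ((2 : ℝ) ^ k * r)).contLinear)
      ((A y ((2 : ℝ) ^ k' * s)).contLinear)
    have h3 : min tx ty ≤ ty := min_le_right _ _
    have h4 := mul_le_mul_of_nonneg_left h3 hε.le
    rw [add_mul, one_mul]
    linarith [hcross]
  have htytx : ty ≤ (1 + ε) * tx := by
    have h2 := norm_sub_norm_le ((A y ((2 : ℝ) ^ k' * s)).contLinear)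
      ((A x ((2 : ℝ) ^ k * r)).contLinear)
    rw [norm_sub_rev] at h2
    have h3 : min tx ty ≤ tx := min_le_left _ _
    have h4 := mul_le_mul_of_nonneg_left h3 hε.le
    rw [add_mul, one_mul]
    linarith [hcross]
  set B : ℝ := (ε * (1 + ε) ^ (k + k')) * min mx my with hBdef
  have hB0 : 0 ≤ B := by positivity
  have hBmin : B = min ((ε * (1 + ε) ^ (k + k')) * mx) ((ε * (1 + ε) ^ (k + k')) * my) := by
    rw [hBdef, mul_min_of_nonneg _ _ (by positivity : (0:ℝ) ≤ ε * (1 + ε) ^ (k + k'))]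
  have hpow_le : ∀ i j : ℕ, i ≤ j → (1 + ε) ^ i ≤ (1 + ε) ^ j := fun i j hij =>
    pow_le_pow_right₀ (by linarith) hij
  -- x-chain links
  have hlinkx : ∀ i < k,
      ‖(A x ((2 : ℝ) ^ (i + 1) * r)).contLinear - (A x ((2 : ℝ) ^ i * r)).contLinear‖ ≤ B := by
    intro i hi
    have hρi : 0 < (2 : ℝ) ^ i * r := by positivity
    have hstep := step_aux hε hA hx hρi
    have e : 2 * ((2 : ℝ) ^ i * r) = (2 : ℝ) ^ (i + 1) * r := by ring
    rw [e] at hstep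
    set ni : ℝ := ‖(A x ((2 : ℝ) ^ i * r)).contLinear‖ with hnidef
    set ni1 : ℝ := ‖(A x ((2 : ℝ) ^ (i + 1) * r)).contLinear‖ with hni1def
    have hni : ni ≤ (1 + ε) ^ i * mx := up_aux hε hA hx hr i
    have bound1 : ‖(A x ((2 : ℝ) ^ (i + 1) * r)).contLinear -
        (A x ((2 : ℝ) ^ i * r)).contLinear‖ ≤ (ε * (1 + ε) ^ (k + k')) * mx := by
      have h5 : min ni1 ni ≤ (1 + ε) ^ (k + k') * mx := by
        refine le_trans (min_le_right _ _) (le_trans hni ?_)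
        exact mul_le_mul_of_nonneg_right (hpow_le i (k + k') (by omega)) hmx0
      refine le_trans hstep ?_
      rw [mul_assoc]
      exact mul_le_mul_of_nonneg_left h5 hε.le
    have bound2 : ‖(A x ((2 : ℝ) ^ (i + 1) * r)).contLinear -
        (A x ((2 : ℝ) ^ i * r)).contLinear‖ ≤ (ε * (1 + ε) ^ (k + k')) * my := by
      have hρi1 : 0 < (2 : ℝ) ^ (i + 1) * r := by positivity
      have hdown := down_aux hε hA hx (k - i - 1) ((2 : ℝ) ^ (i + 1) * r) hρi1
      have e2 : (2 : ℝ) ^ (k - i - 1) * ((2 : ℝ) ^ (i + 1) * r) = (2 : ℝ) ^ k * r := by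
        rw [← mul_assoc, ← pow_add]
        congr 2
        omega
      rw [e2] at hdown
      have h6 : ni1 ≤ (1 + ε) ^ (k + k' - i) * my := by
        have s1 : (1 + ε) * ty ≤ (1 + ε) * ((1 + ε) ^ k' * my) :=
          mul_le_mul_of_nonneg_left hty_up (by linarith)
        have s2 : tx ≤ (1 + ε) * ((1 + ε) ^ k' * my) := le_trans htxty s1
        have s3 : ni1 ≤ (1 + ε) ^ (k - i - 1) * ((1 + ε) * ((1 + ε) ^ k' * my)) :=
          le_trans hdown (mul_le_mul_of_nonneg_left s2 (by positivity))
        have e3 : (1 + ε) ^ (k - i - 1) * ((1 + ε) * ((1 + ε) ^ k' * my)) =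
            (1 + ε) ^ (k - i - 1 + 1 + k') * my := by rw [pow_add, pow_add]; ring
        have e4 : k - i - 1 + 1 + k' = k + k' - i := by omega
        rw [e3, e4] at s3
        exact s3
      have h7 : min ni1 ni ≤ (1 + ε) ^ (k + k') * my := by
        refine le_trans (min_le_left _ _) (le_trans h6 ?_)
        exact mul_le_mul_of_nonneg_right (hpow_le _ _ (by omega)) hmy0
      refine le_trans hstep ?_
      rw [mul_assoc]
      exact mul_le_mul_of_nonneg_left h7 hε.le
    rw [hBmin]
    exact le_min bound1 bound2
  -- y-chain links
  have hlinky : ∀ i < k',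
      ‖(A y ((2 : ℝ) ^ (i + 1) * s)).contLinear - (A y ((2 : ℝ) ^ i * s)).contLinear‖ ≤ B := by
    intro i hi
    have hρi : 0 < (2 : ℝ) ^ i * s := by positivity
    have hstep := step_aux hε hA hy hρi
    have e : 2 * ((2 : ℝ) ^ i * s) = (2 : ℝ) ^ (i + 1) * s := by ring
    rw [e] at hstep
    set ni : ℝ := ‖(A y ((2 : ℝ) ^ i * s)).contLinear‖ with hnidef
    set ni1 : ℝ := ‖(A y ((2 : ℝ) ^ (i + 1) * s)).contLinear‖ with hni1def
    have hni : ni ≤ (1 + ε) ^ i * my := up_aux hε hA hy hs i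
    have bound1 : ‖(A y ((2 : ℝ) ^ (i + 1) * s)).contLinear -
        (A y ((2 : ℝ) ^ i * s)).contLinear‖ ≤ (ε * (1 + ε) ^ (k + k')) * my := by
      have h5 : min ni1 ni ≤ (1 + ε) ^ (k + k') * my := by
        refine le_trans (min_le_right _ _) (le_trans hni ?_)
        exact mul_le_mul_of_nonneg_right (hpow_le i (k + k') (by omega)) hmy0
      refine le_trans hstep ?_
      rw [mul_assoc]
      exact mul_le_mul_of_nonneg_left h5 hε.le
    have bound2 : ‖(A y ((2 : ℝ) ^ (i + 1) * s)).contLinear -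
        (A y ((2 : ℝ) ^ i * s)).contLinear‖ ≤ (ε * (1 + ε) ^ (k + k')) * mx := by
      have hρi1 : 0 < (2 : ℝ) ^ (i + 1) * s := by positivity
      have hdown := down_aux hε hA hy (k' - i - 1) ((2 : ℝ) ^ (i + 1) * s) hρi1
      have e2 : (2 : ℝ) ^ (k' - i - 1) * ((2 : ℝ) ^ (i + 1) * s) = (2 : ℝ) ^ k' * s := by
        rw [← mul_assoc, ← pow_add]
        congr 2
        omega
      rw [e2] at hdown
      have h6 : ni1 ≤ (1 + ε) ^ (k + k' - i) * mx := by
        have s1 : (1 + ε) * tx ≤ (1 + ε) * ((1 + ε) ^ k * mx) :=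
          mul_le_mul_of_nonneg_left htx_up (by linarith)
        have s2 : ty ≤ (1 + ε) * ((1 + ε) ^ k * mx) := le_trans htytx s1
        have s3 : ni1 ≤ (1 + ε) ^ (k' - i - 1) * ((1 + ε) * ((1 + ε) ^ k * mx)) :=
          le_trans hdown (mul_le_mul_of_nonneg_left s2 (by positivity))
        have e3 : (1 + ε) ^ (k' - i - 1) * ((1 + ε) * ((1 + ε) ^ k * mx)) =
            (1 + ε) ^ (k' - i - 1 + 1 + k) * mx := by rw [pow_add, pow_add]; ring
        have e4 : k' - i - 1 + 1 + k = k + k' - i := by omega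
        rw [e3, e4] at s3
        exact s3
      have h7 : min ni1 ni ≤ (1 + ε) ^ (k + k') * mx := by
        refine le_trans (min_le_left _ _) (le_trans h6 ?_)
        exact mul_le_mul_of_nonneg_right (hpow_le _ _ (by omega)) hmx0
      refine le_trans hstep ?_
      rw [mul_assoc]
      exact mul_le_mul_of_nonneg_left h7 hε.le
    rw [hBmin, min_comm]
    exact le_min bound1 bound2
  -- cross ≤ B
  have hcrossB : ‖(A x ((2 : ℝ) ^ k * r)).contLinear -
      (A y ((2 : ℝ) ^ k' * s)).contLinear‖ ≤ B := by
    have bound1 : ε * min tx ty ≤ (ε * (1 + ε) ^ (k + k')) * mx := by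
      have h5 : min tx ty ≤ (1 + ε) ^ (k + k') * mx := by
        refine le_trans (min_le_left _ _) (le_trans htx_up ?_)
        exact mul_le_mul_of_nonneg_right (hpow_le _ _ (by omega)) hmx0
      rw [mul_assoc]
      exact mul_le_mul_of_nonneg_left h5 hε.le
    have bound2 : ε * min tx ty ≤ (ε * (1 + ε) ^ (k + k')) * my := by
      have h5 : min tx ty ≤ (1 + ε) ^ (k + k') * my := by
        refine le_trans (min_le_right _ _) (le_trans hty_up ?_)
        exact mul_le_mul_of_nonneg_right (hpow_le _ _ (by omega)) hmy0
      rw [mul_assoc]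
      exact mul_le_mul_of_nonneg_left h5 hε.le
    refine le_trans hcross ?_
    rw [hBmin]
    exact le_min bound1 bound2
  -- telescoping
  have hDx : ‖(A x ((2 : ℝ) ^ k * r)).contLinear - (A x r).contLinear‖ ≤ k * B := by
    have := tele_aux (fun i => (A x ((2 : ℝ) ^ i * r)).contLinear) B k hlinkx
    simpa using this
  have hDy : ‖(A y ((2 : ℝ) ^ k' * s)).contLinear - (A y s).contLinear‖ ≤ k' * B := by
    have := tele_aux (fun i => (A y ((2 : ℝ) ^ i * s)).contLinear) B k' hlinky
    simpa using this
  have hD : ‖(A x r).contLinear - (A y s).contLinear‖ ≤ ((k : ℝ) + (k' : ℝ) + 1) * B := by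
    have t1 := norm_sub_le_norm_sub_add_norm_sub ((A x r).contLinear)
      ((A x ((2 : ℝ) ^ k * r)).contLinear) ((A y s).contLinear)
    have t2 := norm_sub_le_norm_sub_add_norm_sub ((A x ((2 : ℝ) ^ k * r)).contLinear)
      ((A y ((2 : ℝ) ^ k' * s)).contLinear) ((A y s).contLinear)
    have e1 : ‖(A x r).contLinear - (A x ((2 : ℝ) ^ k * r)).contLinear‖ =
        ‖(A x ((2 : ℝ) ^ k * r)).contLinear - (A x r).contLinear‖ := norm_sub_rev _ _
    rw [e1] at t1
    have e2 : ((k : ℝ) + (k' : ℝ) + 1) * B = (k : ℝ) * B + B + (k' : ℝ) * B := by ring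
    rw [e2]
    linarith [hDx, hDy, hcrossB, t1, t2]
  -- final numeric comparison
  rw [hRmax, hminrs]
  have hklog : (k : ℝ) ≤ Real.logb 2 (R / r) := Nat.floor_le hlogr
  have hk'log : (k' : ℝ) ≤ Real.logb 2 (R / r) := by
    refine (Nat.floor_le hlogs).trans ?_
    exact Real.logb_le_logb_of_le one_lt_two (by positivity)
      (div_le_div_of_nonneg_left hRpos.le hr hrs)
  have hexp : ((1 : ℝ) + ε) ^ (k + k') ≤ (R / r) ^ (2 * Real.logb 2 (1 + ε)) := by
    have e1 : ((1 : ℝ) + ε) ^ (k + k') = (1 + ε) ^ (((k + k' : ℕ) : ℝ)) :=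
      (Real.rpow_natCast _ _).symm
    rw [e1]
    calc (1 + ε) ^ (((k + k' : ℕ) : ℝ)) ≤ (1 + ε) ^ (2 * Real.logb 2 (R / r)) := by
          apply Real.rpow_le_rpow_of_exponent_le (by linarith)
          push_cast
          linarith
      _ = (R / r) ^ (2 * Real.logb 2 (1 + ε)) := rpow_swap_aux 2 hε1 (by positivity)
  have hcoef : ((k : ℝ) + (k' : ℝ) + 1) ≤ 2 * Real.logb 2 (R / r) + 1 := by linarith
  have hfinal : ((k : ℝ) + (k' : ℝ) + 1) * ((1 + ε) ^ (k + k')) ≤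
      (2 * Real.logb 2 (R / r) + 1) * (R / r) ^ (2 * Real.logb 2 (1 + ε)) := by
    apply mul_le_mul hcoef hexp (by positivity) (by linarith)
  have hεm : 0 ≤ ε * min mx my := by positivity
  calc ‖(A x r).contLinear - (A y s).contLinear‖ ≤ ((k : ℝ) + (k' : ℝ) + 1) * B := hD
    _ = (((k : ℝ) + (k' : ℝ) + 1) * ((1 + ε) ^ (k + k'))) * (ε * min mx my) := by
        rw [hBdef]; ring
    _ ≤ ((2 * Real.logb 2 (R / r) + 1) * (R / r) ^ (2 * Real.logb 2 (1 + ε))) *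
          (ε * min mx my) := mul_le_mul_of_nonneg_right hfinal hεm
    _ = Tfun ε (R / r) * ε * min mx my := by rw [Tfun]; ring

end Main

/-- If `A` is an `ε`-compatible family over `E`, then for all `x, y ∈ E` and
`r, s > 0`, `‖A'_{x,r} − A'_{y,s}‖ ≤ T_ε(τ)·ε·min(‖A'_{x,r}‖, ‖A'_{y,s}‖)` where
`τ = max(r, s, 2|x−y|)/min(r,s)`. -/
theorem compatible_family_general_estimate (n N : ℕ) (E : Set (EuclideanSpace ℝ (Fin n)))
    (A : EuclideanSpace ℝ (Fin n) → ℝ →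
      ContinuousAffineMap ℝ (EuclideanSpace ℝ (Fin n)) (EuclideanSpace ℝ (Fin N)))
    (ε : ℝ) (hε : 0 < ε) (hA : IsCompatibleFamily n N E A ε) :
    ∀ x ∈ E, ∀ y ∈ E, ∀ r s : ℝ, 0 < r → 0 < s →
      ‖(A x r).contLinear - (A y s).contLinear‖ ≤
        Tfun ε (max (max r s) (2 * dist x y) / min r s) * ε *
          min ‖(A x r).contLinear‖ ‖(A y s).contLinear‖ := by
  intro x hx y hy r s hr hs
  rcases le_total r s with h | h
  · exact main_aux hε hA hx hy hr hs h
  · have := main_aux hε hA hy hx hs hr h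
    rw [norm_sub_rev, dist_comm y x, max_comm s r,
      min_comm s r, min_comm ‖(A y s).contLinear‖ ‖(A x r).contLinear‖] at this
    exact this
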